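/- Let (X,d) be a separable metric space with the Heine–Borel property, 1 ≤ p < ∞, and μ ∈ P_p(X). Let Y_1, Y_2, … be i.i.d. X-valued random elements with common distribution μ, and let bar μ_n := (1/n)∑_{i=1}^n δ_{Y_i}. Then, almost surely, ρ(F_p(bar μ_n), F_p(μ)) → 0 and ρ(F_p^*(bar μ_n), F_p^*(μ)) → 0 as n → ∞; i.e., the strong law of large numbers for Fréchet p-means and restricted Fréchet p-means holds in the Hausdorff upper topology. -/

import Mathlib

open MeasureTheory Filter Topology ProbabilityTheory
open scoped ENNReal NNReal

/-- `f_p(μ,x) := ∫ d(x,y)^p dμ(y)`. -/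
noncomputable def fp {X : Type*} [MetricSpace X] [MeasurableSpace X]
    (p : ℝ) (μ : Measure X) (x : X) : ℝ :=
  ∫ y, dist x y ^ p ∂μ

/-- Membership in `P_p(X)`. -/
def MemPp {X : Type*} [MetricSpace X] [MeasurableSpace X] (p : ℝ) (μ : Measure X) : Prop :=
  ∀ x : X, Integrable (fun y => dist x y ^ p) μ

/-- Weak convergence of a sequence of Borel measures. -/
def WeakConv {X : Type*} [MetricSpace X] [MeasurableSpace X]
    (μs : ℕ → Measure X) (μ : Measure X) : Prop :=
  ∀ g : BoundedContinuousFunction X ℝ,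
    Tendsto (fun n => ∫ y, g y ∂(μs n)) atTop (𝓝 (∫ y, g y ∂μ))

/-- Convergence in `τ_w^p`. -/
def TauWp {X : Type*} [MetricSpace X] [MeasurableSpace X]
    (p : ℝ) (μs : ℕ → Measure X) (μ : Measure X) : Prop :=
  WeakConv μs μ ∧ ∀ x : X, Tendsto (fun n => fp p (μs n) x) atTop (𝓝 (fp p μ x))

/-- Joint Fréchet p-mean `F_p(μ,C)`. -/
def Fp {X : Type*} [MetricSpace X] [MeasurableSpace X]
    (p : ℝ) (μ : Measure X) (C : Set X) : Set X :=
  {x ∈ C | ∀ x' ∈ C, fp p μ x ≤ fp p μ x'}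

/-- Support of a measure. -/
def msupport {X : Type*} [MetricSpace X] [MeasurableSpace X] (μ : Measure X) : Set X :=
  {x : X | ∀ U : Set X, IsOpen U → x ∈ U → 0 < μ U}

/-- Kuratowski upper limit. -/
def KurLs {X : Type*} [MetricSpace X] (C : ℕ → Set X) : Set X :=
  ⋂ n, closure (⋃ m, ⋃ (_ : n ≤ m), C m)

/-- Kuratowski lower limit. -/
def KurLi {X : Type*} [MetricSpace X] (C : ℕ → Set X) : Set X :=
  {x : X | ∀ ε : ℝ, 0 < ε → ∀ᶠ n in atTop, ∃ y ∈ C n, dist x y < ε}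

/-- One-sided Hausdorff distance `ρ(C,C') = max_{x ∈ C} min_{x' ∈ C'} d(x,x')`. -/
noncomputable def rho {X : Type*} [MetricSpace X] (C C' : Set X) : ℝ :=
  ⨆ x ∈ C, Metric.infDist x C'

/-- Empirical measure of the first `n` samples. -/
noncomputable def empMeasure {X Ω : Type*} [MeasurableSpace X]
    (Y : ℕ → Ω → X) (n : ℕ) (ω : Ω) : Measure X :=
  (n : ENNReal)⁻¹ • ∑ i ∈ Finset.range n, Measure.dirac (Y i ω)

/-- Effros σ-algebra on subsets of `X`. -/
def effros (X : Type*) [TopologicalSpace X] : MeasurableSpace (Set X) :=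
  MeasurableSpace.generateFrom
    {S : Set (Set X) | ∃ U : Set X, IsOpen U ∧ S = {C : Set X | (C ∩ U).Nonempty}}

/-- The relation `x ⇝_μ x'`. -/
def LeadsTo {X : Type*} [MetricSpace X] [MeasurableSpace X] (μ : Measure X) (x x' : X) : Prop :=
  ∃ ε₀ > (0 : ℝ), ∀ ε : ℝ, 0 < ε → ε ≤ ε₀ →
    ∃ φ : X → X, Set.MapsTo φ (Metric.ball x ε) (Metric.ball x' ε) ∧
      Measurable ((Metric.ball x ε).restrict φ) ∧
      ∀ z ∈ Metric.ball x ε, ∀ᵐ y ∂μ, dist (φ z) y = dist z y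

/-- The equivalence relation `x ∼_μ x'`. -/
def SimEq {X : Type*} [MetricSpace X] [MeasurableSpace X] (μ : Measure X) (x x' : X) : Prop :=
  LeadsTo μ x x' ∧ LeadsTo μ x' x

/-- The equivalence class `[x]_μ`. -/
def eqClass {X : Type*} [MetricSpace X] [MeasurableSpace X] (μ : Measure X) (x : X) : Set X :=
  {x' : X | SimEq μ x x'}

section FrechetAux

open Metric Set

variable {X : Type*} [MetricSpace X]

private lemma rpow_sub_rpow_le' {p a b : ℝ} (hp : 1 ≤ p) (ha : 0 ≤ a) (hab : a ≤ b) :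
    b ^ p - a ^ p ≤ p * (b - a) * b ^ (p - 1) := by
  rcases eq_or_lt_of_le hab with rfl | hlt
  · simp
  obtain ⟨c, hc, hc'⟩ := exists_hasDerivAt_eq_slope (fun x : ℝ => x ^ p)
    (fun x : ℝ => p * x ^ (p - 1)) hlt
    (fun x _ => (Real.hasDerivAt_rpow_const (Or.inr hp)).continuousAt.continuousWithinAt)
    (fun x _ => Real.hasDerivAt_rpow_const (Or.inr hp))
  have hc0 : 0 ≤ c := le_of_lt (lt_of_le_of_lt ha hc.1)
  have hcb : c ^ (p - 1) ≤ b ^ (p - 1) :=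
    Real.rpow_le_rpow hc0 (le_of_lt hc.2) (by linarith)
  have hba : 0 < b - a := sub_pos.2 hlt
  have heq : b ^ p - a ^ p = p * c ^ (p - 1) * (b - a) := by
    have h2 := hc'
    rw [eq_div_iff hba.ne'] at h2
    linarith
  rw [heq]
  have hp0 : (0:ℝ) ≤ p := by linarith
  calc p * c ^ (p - 1) * (b - a) ≤ p * b ^ (p - 1) * (b - a) := by
        exact mul_le_mul_of_nonneg_right (mul_le_mul_of_nonneg_left hcb hp0) hba.le
    _ = p * (b - a) * b ^ (p - 1) := by ring

private lemma abs_rpow_sub_rpow_le {p a b : ℝ} (hp : 1 ≤ p) (ha : 0 ≤ a) (hb : 0 ≤ b) :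
    |a ^ p - b ^ p| ≤ p * |a - b| * max a b ^ (p - 1) := by
  rcases le_total a b with h | h
  · rw [abs_sub_comm, abs_of_nonneg (sub_nonneg.2 (Real.rpow_le_rpow ha h (by linarith))),
      abs_sub_comm (a := a), abs_of_nonneg (sub_nonneg.2 h), max_eq_right h]
    exact rpow_sub_rpow_le' hp ha h
  · rw [abs_of_nonneg (sub_nonneg.2 (Real.rpow_le_rpow hb h (by linarith))),
      abs_of_nonneg (sub_nonneg.2 h), max_eq_left h]
    exact rpow_sub_rpow_le' hp hb h

private lemma rpow_sub_one_le {p t : ℝ} (hp : 1 ≤ p) (ht : 0 ≤ t) :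
    t ^ (p - 1) ≤ 1 + t ^ p := by
  rcases le_total t 1 with h | h
  · have h1 := Real.rpow_le_one ht h (by linarith : (0:ℝ) ≤ p - 1)
    have h2 : 0 ≤ t ^ p := Real.rpow_nonneg ht p
    linarith
  · have h1 := Real.rpow_le_rpow_of_exponent_le h (by linarith : p - 1 ≤ p)
    linarith

private lemma add_rpow_le {p a b : ℝ} (hp : 1 ≤ p) (ha : 0 ≤ a) (hb : 0 ≤ b) :
    (a + b) ^ p ≤ 2 ^ p * (a ^ p + b ^ p) := by
  have h1 : a + b ≤ 2 * max a b := by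
    rcases le_total a b with h | h
    · rw [max_eq_right h]; linarith
    · rw [max_eq_left h]; linarith
  have hm : 0 ≤ max a b := le_max_of_le_left ha
  have hp0 : (0:ℝ) ≤ p := by linarith
  calc (a + b) ^ p ≤ (2 * max a b) ^ p := Real.rpow_le_rpow (by linarith) h1 hp0
    _ = 2 ^ p * max a b ^ p := Real.mul_rpow (by norm_num) hm
    _ ≤ 2 ^ p * (a ^ p + b ^ p) := by
        refine mul_le_mul_of_nonneg_left ?_ (Real.rpow_nonneg (by norm_num) p)
        rcases le_total a b with h | h
        · rw [max_eq_right h]; have := Real.rpow_nonneg ha p; linarith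
        · rw [max_eq_left h]; have := Real.rpow_nonneg hb p; linarith

private lemma rho_nonneg' {C C' : Set X} : 0 ≤ rho C C' :=
  Real.iSup_nonneg fun _ => Real.iSup_nonneg fun _ => Metric.infDist_nonneg

private lemma rho_le_of_forall {C C' : Set X} {ε : ℝ} (hε : 0 ≤ ε)
    (h : ∀ x ∈ C, Metric.infDist x C' ≤ ε) : rho C C' ≤ ε :=
  Real.iSup_le (fun x => Real.iSup_le (fun hx => h x hx) hε) hε

private lemma tendsto_of_eventually_le' {u : ℕ → ℝ} (h0 : ∀ n, 0 ≤ u n)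
    (h : ∀ ε : ℝ, 0 < ε → ∀ᶠ n in atTop, u n ≤ ε) :
    Tendsto u atTop (𝓝 0) := by
  rw [tendsto_order]
  constructor
  · intro a ha
    exact Eventually.of_forall fun n => lt_of_lt_of_le ha (h0 n)
  · intro a ha
    filter_upwards [h (a / 2) (by linarith)] with n hn
    linarith

private lemma eventually_abs_sub_le {u : ℕ → ℝ} {a : ℝ} (h : Tendsto u atTop (𝓝 a))
    {η : ℝ} (hη : 0 < η) : ∀ᶠ n in atTop, |u n - a| ≤ η := by
  have h2 := h.eventually
    (show ∀ᶠ y in 𝓝 a, y ∈ Metric.closedBall a η from Metric.closedBall_mem_nhds a hη)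
  filter_upwards [h2] with n hn
  simpa [Metric.mem_closedBall, Real.dist_eq] using hn

variable [MeasurableSpace X] [OpensMeasurableSpace X]

private lemma integrable_dirac'' {f : X → ℝ} (hf : Continuous f) (a : X) :
    Integrable f (Measure.dirac a) := by
  refine ⟨hf.aestronglyMeasurable, ?_⟩
  simp only [HasFiniteIntegral]
  rw [lintegral_dirac' a hf.measurable.enorm]
  exact enorm_lt_top

private lemma integral_empMeasure' {Ω : Type*} (Y : ℕ → Ω → X) (n : ℕ) (ω : Ω)
    {g : X → ℝ} (hg : Continuous g) :
    ∫ y, g y ∂(empMeasure Y n ω) = (∑ i ∈ Finset.range n, g (Y i ω)) / ((n : ℕ) : ℝ) := by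
  rw [empMeasure, integral_smul_measure,
    integral_finset_sum_measure (fun i _ => integrable_dirac'' hg (Y i ω))]
  simp only [integral_dirac]
  rw [ENNReal.toReal_inv, ENNReal.toReal_natCast, smul_eq_mul, inv_mul_eq_div]

private lemma integrable_empMeasure {Ω : Type*} (Y : ℕ → Ω → X) (n : ℕ) (ω : Ω)
    {g : X → ℝ} (hg : Continuous g) : Integrable g (empMeasure Y n ω) := by
  rcases Nat.eq_zero_or_pos n with rfl | hn
  · simp only [empMeasure, Finset.range_zero, Finset.sum_empty, smul_zero]
    exact integrable_zero_measure
  · rw [empMeasure]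
    refine Integrable.smul_measure ?_ (ENNReal.inv_ne_top.2 (by exact_mod_cast hn.ne'))
    rw [integrable_finset_sum_measure]
    exact fun i _ => integrable_dirac'' hg _

private lemma empMeasure_pos_iff {Ω : Type*} (Y : ℕ → Ω → X) {n : ℕ} (hn : n ≠ 0) (ω : Ω)
    {U : Set X} (hU : MeasurableSet U) :
    0 < empMeasure Y n ω U ↔ ∃ i < n, Y i ω ∈ U := by
  have hsum : (∑ i ∈ Finset.range n, Measure.dirac (Y i ω)) U
      = ∑ i ∈ Finset.range n, U.indicator (1 : X → ℝ≥0∞) (Y i ω) := by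
    rw [Measure.finset_sum_apply]
    exact Finset.sum_congr rfl fun i _ => Measure.dirac_apply' _ hU
  rw [empMeasure, Measure.smul_apply, smul_eq_mul, hsum, pos_iff_ne_zero, mul_ne_zero_iff]
  constructor
  · rintro ⟨-, hsne⟩
    by_contra hno
    push_neg at hno
    exact hsne (Finset.sum_eq_zero fun i hi =>
      Set.indicator_of_notMem (hno i (Finset.mem_range.1 hi)) _)
  · rintro ⟨i, hi, hmem⟩
    refine ⟨ENNReal.inv_ne_zero.2 (ENNReal.natCast_ne_top n), fun hzero => ?_⟩
    have h2 : U.indicator (1 : X → ℝ≥0∞) (Y i ω) = 0 :=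
      (Finset.sum_eq_zero_iff.1 hzero) i (Finset.mem_range.2 hi)
    rw [Set.indicator_of_mem hmem] at h2
    exact one_ne_zero h2

private lemma isClosed_msupport' (μ : Measure X) : IsClosed (msupport μ) := by
  rw [← isOpen_compl_iff, isOpen_iff_forall_mem_open]
  intro x hx
  simp only [msupport, mem_compl_iff, mem_setOf_eq, not_forall] at hx
  obtain ⟨U, hU, hxU, hpos⟩ := hx
  refine ⟨U, fun y hy => ?_, hU, hxU⟩
  intro hsup
  exact hpos (hsup U hU hy)

private lemma measure_compl_msupport [SecondCountableTopology X] (μ : Measure X) :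
    μ (msupport μ)ᶜ = 0 := by
  obtain ⟨T, hTc, hTsub, hTeq⟩ := TopologicalSpace.isOpen_sUnion_countable
    {U : Set X | IsOpen U ∧ μ U = 0} (fun U hU => hU.1)
  have hsub : (msupport μ)ᶜ ⊆ ⋃₀ T := by
    rw [hTeq]
    intro x hx
    simp only [msupport, mem_compl_iff, mem_setOf_eq, not_forall] at hx
    obtain ⟨U, hU, hxU, hpos⟩ := hx
    exact ⟨U, ⟨hU, le_zero_iff.1 (not_lt.1 hpos)⟩, hxU⟩
  refine measure_mono_null hsub ?_
  rw [measure_sUnion_null_iff hTc]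
  exact fun s hs => (hTsub hs).2

private lemma msupport_empMeasure {Ω : Type*} (Y : ℕ → Ω → X) {n : ℕ} (hn : n ≠ 0) (ω : Ω) :
    msupport (empMeasure Y n ω) = {x | ∃ i < n, Y i ω = x} := by
  have hfin : ({x | ∃ i < n, Y i ω = x} : Set X).Finite := by
    have heq : {x | ∃ i < n, Y i ω = x} = (fun i => Y i ω) '' (Set.Iio n) := by
      ext x
      simp only [Set.mem_setOf_eq, Set.mem_image, Set.mem_Iio]
    rw [heq]
    exact (Set.finite_Iio n).image _
  apply Set.eq_of_subset_of_subset
  · intro x hx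
    by_contra hxS
    have hopen : IsOpen ({x | ∃ i < n, Y i ω = x} : Set X)ᶜ := hfin.isClosed.isOpen_compl
    have hpos := hx _ hopen hxS
    rw [empMeasure_pos_iff Y hn ω hopen.measurableSet] at hpos
    obtain ⟨i, hi, hmem⟩ := hpos
    exact hmem ⟨i, hi, rfl⟩
  · rintro x ⟨i, hi, rfl⟩
    intro U hU hxU
    rw [empMeasure_pos_iff Y hn ω hU.measurableSet]
    exact ⟨i, hi, hxU⟩

private lemma fp_abs_sub_le {p : ℝ} (hp : 1 ≤ p) {ν : Measure X} (hν : MemPp p ν)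
    {z : X} {R : ℝ} (hH : Integrable (fun y => (dist z y + R) ^ (p - 1)) ν)
    {x x' : X} (hx : dist x z ≤ R) (hx' : dist x' z ≤ R) :
    |fp p ν x - fp p ν x'| ≤ p * dist x x' * ∫ y, (dist z y + R) ^ (p - 1) ∂ν := by
  have hp0 : (0:ℝ) ≤ p := by linarith
  have hsub : fp p ν x - fp p ν x' = ∫ y, (dist x y ^ p - dist x' y ^ p) ∂ν :=
    (integral_sub (hν x) (hν x')).symm
  rw [hsub]
  have h1 : |∫ y, (dist x y ^ p - dist x' y ^ p) ∂ν|
      ≤ ∫ y, |dist x y ^ p - dist x' y ^ p| ∂ν := by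
    simpa [Real.norm_eq_abs] using
      norm_integral_le_integral_norm (fun y => dist x y ^ p - dist x' y ^ p) (μ := ν)
  refine h1.trans ?_
  rw [← integral_const_mul]
  have h4 : Integrable (fun y => |dist x y ^ p - dist x' y ^ p|) ν :=
    ((hν x).sub (hν x')).abs
  have h5 : Integrable (fun y => p * dist x x' * (dist z y + R) ^ (p - 1)) ν :=
    hH.const_mul _
  refine integral_mono h4 h5 fun y => ?_
  simp only
  have key := abs_rpow_sub_rpow_le hp (dist_nonneg (x := x) (y := y))
    (dist_nonneg (x := x') (y := y))
  have hmax : max (dist x y) (dist x' y) ≤ dist z y + R := by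
    refine max_le ?_ ?_
    · linarith [dist_triangle x z y, hx]
    · linarith [dist_triangle x' z y, hx']
  have h2 : (max (dist x y) (dist x' y)) ^ (p - 1) ≤ (dist z y + R) ^ (p - 1) :=
    Real.rpow_le_rpow (le_max_of_le_left dist_nonneg) hmax (by linarith)
  have h3 : |dist x y - dist x' y| ≤ dist x x' := abs_dist_sub_le x x' y
  calc |dist x y ^ p - dist x' y ^ p|
      ≤ p * |dist x y - dist x' y| * max (dist x y) (dist x' y) ^ (p - 1) := key
    _ ≤ p * dist x x' * (dist z y + R) ^ (p - 1) :=
        mul_le_mul (mul_le_mul_of_nonneg_left h3 hp0) h2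
          (Real.rpow_nonneg (le_max_of_le_left dist_nonneg) _)
          (by positivity)

private lemma integrable_H {p : ℝ} (hp : 1 ≤ p) {ν : Measure X} [IsFiniteMeasure ν]
    (hν : MemPp p ν) (z : X) {R : ℝ} (hR : 0 ≤ R) :
    Integrable (fun y => (dist z y + R) ^ (p - 1)) ν := by
  have hcont : Continuous fun y : X => (dist z y + R) ^ (p - 1) :=
    (Real.continuous_rpow_const (by linarith)).comp
      ((continuous_const.dist continuous_id).add continuous_const)
  refine Integrable.mono' (g := fun y => 1 + 2 ^ p * (dist z y ^ p + R ^ p)) ?_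
    hcont.aestronglyMeasurable ?_
  · exact (integrable_const 1).add (((hν z).add (integrable_const _)).const_mul _)
  · refine Filter.Eventually.of_forall fun y => ?_
    rw [Real.norm_eq_abs, abs_of_nonneg (Real.rpow_nonneg (by positivity) _)]
    calc (dist z y + R) ^ (p - 1) ≤ 1 + (dist z y + R) ^ p :=
          rpow_sub_one_le hp (by positivity)
      _ ≤ 1 + 2 ^ p * (dist z y ^ p + R ^ p) := by
          linarith [add_rpow_le hp (dist_nonneg (x := z) (y := y)) hR]

private lemma fp_lower {p : ℝ} (hp : 1 ≤ p) {ν : Measure X} [IsFiniteMeasure ν] (hν : MemPp p ν)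
    {x0 x : X} {T : ℝ} (hT : 0 ≤ T) (hd : T ≤ dist x x0) :
    (ν (ball x0 T)).toReal * (dist x x0 - T) ^ p ≤ fp p ν x := by
  have hind : ∀ y, (ball x0 T).indicator (fun _ => (dist x x0 - T) ^ p) y ≤ dist x y ^ p := by
    intro y
    by_cases hy : y ∈ ball x0 T
    · rw [Set.indicator_of_mem hy]
      refine Real.rpow_le_rpow (by linarith) ?_ (by linarith)
      have h5 : dist y x0 < T := mem_ball.1 hy
      have h6 := dist_triangle x y x0
      have h7 := dist_triangle x x0 y
      rw [dist_comm x0 y] at h7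
      linarith
    · rw [Set.indicator_of_notMem hy]
      exact Real.rpow_nonneg dist_nonneg _
  calc (ν (ball x0 T)).toReal * (dist x x0 - T) ^ p
      = ∫ y, (ball x0 T).indicator (fun _ => (dist x x0 - T) ^ p) y ∂ν := by
        rw [integral_indicator_const _ measurableSet_ball, smul_eq_mul]
        rfl
    _ ≤ fp p ν x :=
        integral_mono ((integrable_const _).indicator measurableSet_ball) (hν x) hind

private lemma continuous_fp {p : ℝ} (hp : 1 ≤ p) {ν : Measure X} [IsFiniteMeasure ν]
    (hν : MemPp p ν) : Continuous (fp p ν) := by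
  have hppos : (0:ℝ) < p := by linarith
  rw [continuous_iff_continuousAt]
  intro x
  have hH : Integrable (fun y => (dist x y + 1) ^ (p - 1)) ν := integrable_H hp hν x zero_le_one
  set C := ∫ y, (dist x y + 1) ^ (p - 1) ∂ν with hC
  have hC0 : 0 ≤ C := integral_nonneg fun y => Real.rpow_nonneg (by positivity) _
  rw [Metric.continuousAt_iff]
  intro ε hε
  refine ⟨min 1 (ε / (p * C + 1)), lt_min one_pos (by positivity), fun {x'} hx' => ?_⟩
  have hd1 : dist x' x ≤ 1 := le_of_lt (lt_of_lt_of_le hx' (min_le_left _ _))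
  have hb := fp_abs_sub_le hp hν (z := x) (R := 1) hH (x := x') (x' := x) hd1 (by simp)
  rw [Real.dist_eq]
  have h1 : dist x' x < ε / (p * C + 1) := lt_of_lt_of_le hx' (min_le_right _ _)
  have h2 : (0:ℝ) < p * C + 1 := by positivity
  rw [lt_div_iff₀ h2] at h1
  have h3 : p * dist x' x * C ≤ dist x' x * (p * C + 1) := by
    nlinarith [dist_nonneg (x := x') (y := x)]
  calc |fp p ν x' - fp p ν x| ≤ p * dist x' x * C := hb
    _ ≤ dist x' x * (p * C + 1) := h3
    _ < ε := h1

private lemma exists_min {g : X → ℝ} (hg : Continuous g)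
    (hHB : ∀ s : Set X, IsClosed s → Bornology.IsBounded s → IsCompact s)
    {S : Set X} (hS : IsClosed S) (hSne : S.Nonempty) {x0 : X}
    (coercg : ∀ B : ℝ, ∃ R : ℝ, ∀ x : X, g x ≤ B → dist x x0 ≤ R) :
    ∃ xF ∈ S, ∀ x ∈ S, g xF ≤ g x := by
  obtain ⟨s0, hs0⟩ := hSne
  obtain ⟨R, hR⟩ := coercg (g s0)
  have hKc : IsCompact (closedBall x0 R ∩ S) :=
    hHB _ (isClosed_closedBall.inter hS) (isBounded_closedBall.subset inter_subset_left)
  have hs0K : s0 ∈ closedBall x0 R ∩ S := ⟨mem_closedBall.2 (hR s0 le_rfl), hs0⟩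
  obtain ⟨z, hzK, hzmin⟩ := hKc.exists_isMinOn ⟨s0, hs0K⟩ hg.continuousOn
  refine ⟨z, hzK.2, fun x hx => ?_⟩
  by_cases hxK : x ∈ closedBall x0 R ∩ S
  · exact hzmin hxK
  · have h1 : ¬ g x ≤ g s0 := fun h => hxK ⟨mem_closedBall.2 (hR x h), hx⟩
    exact le_trans (hzmin hs0K) (le_of_lt (not_le.1 h1))

private lemma main_det (hHB : ∀ s : Set X, IsClosed s → Bornology.IsBounded s → IsCompact s)
    {g : X → ℝ} (hg : Continuous g) {f : ℕ → X → ℝ}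
    {S : Set X} (hS : IsClosed S) {Sn : ℕ → Set X} (hSn : ∀ n, Sn n ⊆ S)
    {xF x0 : X} (hxFS : xF ∈ S) (hxFmin : ∀ x ∈ S, g xF ≤ g x)
    (coerc : ∀ B : ℝ, ∃ R : ℝ, ∀ᶠ n in atTop, ∀ x : X, f n x ≤ B → dist x x0 ≤ R)
    (unif : ∀ K : Set X, IsCompact K → ∀ η : ℝ, 0 < η →
      ∀ᶠ n in atTop, ∀ x ∈ K, |f n x - g x| ≤ η)
    (approx : ∀ η : ℝ, 0 < η → ∀ᶠ n in atTop, ∃ y ∈ Sn n, f n y ≤ g xF + η)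
    {ε : ℝ} (hε : 0 < ε) :
    ∀ᶠ n in atTop, ∀ x ∈ Sn n, (∀ x' ∈ Sn n, f n x ≤ f n x') →
      Metric.infDist x {z ∈ S | ∀ x' ∈ S, g z ≤ g x'} ≤ ε := by
  classical
  obtain ⟨R, hR⟩ := coerc (g xF + 1)
  set F : Set X := {z ∈ S | ∀ x' ∈ S, g z ≤ g x'} with hF
  set K' : Set X := (closedBall x0 R ∩ S) ∩ {x | ε ≤ Metric.infDist x F} with hK'
  have hK'closed : IsClosed K' :=
    (isClosed_closedBall.inter hS).inter
      (isClosed_le continuous_const (Metric.continuous_infDist_pt F))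
  have hK'cpt : IsCompact K' :=
    hHB _ hK'closed (isBounded_closedBall.subset (fun x hx => hx.1.1))
  obtain ⟨δ, hδpos, hδ⟩ : ∃ δ : ℝ, 0 < δ ∧ ∀ x ∈ K', g xF + δ ≤ g x := by
    by_cases hne : K'.Nonempty
    · obtain ⟨z, hzK', hzmin⟩ := hK'cpt.exists_isMinOn hne hg.continuousOn
      have hzS : z ∈ S := hzK'.1.2
      have h1 : g xF ≤ g z := hxFmin z hzS
      have h2 : g xF ≠ g z := by
        intro h
        have hzF : z ∈ F := ⟨hzS, fun x' hx' => h ▸ hxFmin x' hx'⟩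
        have h3 := hzK'.2
        rw [Set.mem_setOf_eq, Metric.infDist_zero_of_mem hzF] at h3
        linarith
      refine ⟨g z - g xF, sub_pos.2 (lt_of_le_of_ne h1 h2), fun x hx => ?_⟩
      have h9 : g z ≤ g x := hzmin hx
      linarith
    · exact ⟨1, one_pos, fun x hx => ((Set.not_nonempty_iff_eq_empty.1 hne) ▸ hx).elim⟩
  set η := min (δ / 3) 1 with hη
  have hηpos : 0 < η := lt_min (by linarith) one_pos
  have hη1 : η ≤ 1 := min_le_right _ _
  have hη3 : 3 * η ≤ δ := by
    have := min_le_left (δ / 3) 1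
    linarith
  filter_upwards [hR,
    unif (closedBall x0 R ∩ S)
      (hHB _ (isClosed_closedBall.inter hS) (isBounded_closedBall.subset fun x hx => hx.1)) η hηpos,
    approx η hηpos] with n hcoercn hunifn happn
  intro x hxSn hxmin
  obtain ⟨y, hySn, hyval⟩ := happn
  have hfx : f n x ≤ g xF + η := (hxmin y hySn).trans hyval
  have hxball : dist x x0 ≤ R := hcoercn x (by linarith)
  have hxK : x ∈ closedBall x0 R ∩ S := ⟨mem_closedBall.2 hxball, hSn n hxSn⟩
  have hgx : g x ≤ g xF + 2 * η := by
    have h1 := hunifn x hxK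
    have h2 : g x - f n x ≤ |f n x - g x| := by
      rw [abs_sub_comm]; exact le_abs_self _
    linarith
  by_contra hcon
  push_neg at hcon
  have hxK' : x ∈ K' := ⟨hxK, le_of_lt hcon⟩
  have := hδ x hxK'
  linarith

end FrechetAux

section SLLNAux

private lemma slln {X : Type*} [MetricSpace X] [MeasurableSpace X] [BorelSpace X]
    {Ω : Type*} [MeasurableSpace Ω] (P : Measure Ω) [IsProbabilityMeasure P]
    (Y : ℕ → Ω → X) (hYmeas : ∀ i, Measurable (Y i))
    (hindep : iIndepFun Y P)
    {μ : Measure X} (hlaw : ∀ i, Measure.map (Y i) P = μ)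
    {g : X → ℝ} (hgm : Measurable g) (hgi : Integrable g μ) :
    ∀ᵐ ω ∂P, Tendsto (fun n => (∑ i ∈ Finset.range n, g (Y i ω)) / ((n : ℕ) : ℝ))
      atTop (𝓝 (∫ y, g y ∂μ)) := by
  have h0 : Integrable (fun ω => g (Y 0 ω)) P := by
    rw [← hlaw 0] at hgi
    exact (integrable_map_measure hgm.aestronglyMeasurable (hYmeas 0).aemeasurable).1 hgi
  have hident : ∀ i : ℕ, IdentDistrib (fun ω => g (Y i ω)) (fun ω => g (Y 0 ω)) P P := by
    intro i
    have hY : IdentDistrib (Y i) (Y 0) P P :=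
      ⟨(hYmeas i).aemeasurable, (hYmeas 0).aemeasurable, by rw [hlaw i, hlaw 0]⟩
    exact hY.comp hgm
  have hpair : Pairwise (Function.onFun (fun f g => IndepFun f g P) fun i ω => g (Y i ω)) :=
    fun i j hij => ((hindep.indepFun hij).comp hgm hgm)
  have key : (∫ ω', g (Y 0 ω') ∂P) = ∫ y, g y ∂μ := by
    rw [← hlaw 0, integral_map (hYmeas 0).aemeasurable hgm.aestronglyMeasurable]
  have h2 := strong_law_ae_real (fun i ω' => g (Y i ω')) h0 hpair hident
  filter_upwards [h2] with ω hω
  rw [show P[fun ω' => g (Y 0 ω')] = ∫ y, g y ∂μ from key] at hω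
  exact hω

end SLLNAux

set_option maxHeartbeats 2000000 in
theorem frechet_stmt15 {X : Type*} [MetricSpace X] [TopologicalSpace.SeparableSpace X]
    [MeasurableSpace X] [BorelSpace X]
    (hHB : ∀ s : Set X, IsClosed s → Bornology.IsBounded s → IsCompact s)
    (p : ℝ) (hp : 1 ≤ p)
    (μ : Measure X) (hμprob : IsProbabilityMeasure μ) (hμPp : MemPp p μ)
    {Ω : Type*} [MeasurableSpace Ω] (P : Measure Ω) (hPprob : IsProbabilityMeasure P)
    (Y : ℕ → Ω → X) (hYmeas : ∀ i, Measurable (Y i))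
    (hindep : iIndepFun Y P)
    (hlaw : ∀ i, Measure.map (Y i) P = μ) :
    ∀ᵐ ω ∂P,
      Tendsto (fun n => rho (Fp p (empMeasure Y (n + 1) ω) Set.univ) (Fp p μ Set.univ))
        atTop (𝓝 0) ∧
      Tendsto (fun n =>
          rho (Fp p (empMeasure Y (n + 1) ω) (msupport (empMeasure Y (n + 1) ω)))
            (Fp p μ (msupport μ)))
        atTop (𝓝 0) := by
  classical
  haveI : SecondCountableTopology X :=
    UniformSpace.secondCountable_of_separable X
  haveI := hμprob
  haveI := hPprob
  rcases isEmpty_or_nonempty X with hX | hX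
  · exfalso
    have h1 : μ Set.univ = 1 := measure_univ
    rw [Set.univ_eq_empty_iff.2 hX, measure_empty] at h1
    exact zero_ne_one h1
  obtain ⟨x0⟩ := hX
  have hppos : (0:ℝ) < p := by linarith
  have hp0 : (0:ℝ) ≤ p := by linarith
  -- choose T with μ(ball x0 T) > 1/2
  obtain ⟨T, hT⟩ : ∃ T : ℕ, (1:ℝ≥0∞)/2 < μ (Metric.ball x0 (T:ℝ)) := by
    have hmono : Monotone fun k : ℕ => Metric.ball x0 (k:ℝ) := fun i j hij =>
      Metric.ball_subset_ball (by exact_mod_cast hij)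
    have htend := tendsto_measure_iUnion_atTop (μ := μ) hmono
    have huniv : (⋃ k : ℕ, Metric.ball x0 (k:ℝ)) = Set.univ := by
      ext y
      simp only [Set.mem_iUnion, Set.mem_univ, iff_true]
      obtain ⟨k, hk⟩ := exists_nat_gt (dist y x0)
      exact ⟨k, Metric.mem_ball.2 hk⟩
    rw [huniv, measure_univ] at htend
    have hev := htend.eventually (eventually_gt_nhds (by norm_num : (1:ℝ≥0∞)/2 < 1))
    exact hev.exists
  set Treal : ℝ := (T : ℝ) with hTreal
  have hT0 : (0:ℝ) ≤ Treal := Nat.cast_nonneg T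
  set c : ℝ := (μ (Metric.ball x0 Treal)).toReal with hcdef
  have hc_half : 1/2 < c := by
    have h2 := ENNReal.toReal_strict_mono (measure_ne_top μ _) hT
    rw [show ((1:ℝ≥0∞)/2).toReal = 1/2 by simp] at h2
    exact h2
  -- countable dense set
  obtain ⟨D, hDc, hDd⟩ := TopologicalSpace.exists_countable_dense X
  -- limit function
  set g : X → ℝ := fp p μ with hgdef
  have hgcont : Continuous g := continuous_fp hp hμPp
  set Hμ : ℕ → ℝ := fun q => ∫ y, (dist x0 y + q) ^ (p - 1) ∂μ with hHμdef
  have hHμ0 : ∀ q : ℕ, 0 ≤ Hμ q := fun q =>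
    integral_nonneg fun y => Real.rpow_nonneg (by positivity) _
  -- coercivity for g
  have coercg : ∀ B : ℝ, ∃ R : ℝ, ∀ x : X, g x ≤ B → dist x x0 ≤ R := by
    intro B
    refine ⟨Treal + (max (2*B) 0 + 1) ^ p⁻¹, fun x hx => ?_⟩
    by_contra hcon
    push_neg at hcon
    have hA0 : (0:ℝ) ≤ (max (2*B) 0 + 1) ^ p⁻¹ := Real.rpow_nonneg (by positivity) _
    have hdT : Treal ≤ dist x x0 := by linarith
    have hlow := fp_lower hp hμPp hT0 hdT
    have hq : 0 ≤ (dist x x0 - Treal) ^ p := Real.rpow_nonneg (by linarith) _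
    have h1 : (dist x x0 - Treal) ^ p ≤ max (2*B) 0 := by
      have h3 : (1/2) * (dist x x0 - Treal) ^ p ≤ c * (dist x x0 - Treal) ^ p :=
        mul_le_mul_of_nonneg_right (by linarith) hq
      have h4 : c * (dist x x0 - Treal) ^ p ≤ B := le_trans hlow hx
      linarith [le_max_left (2*B) (0:ℝ)]
    have h2 : dist x x0 - Treal ≤ (max (2*B) 0 + 1) ^ p⁻¹ := by
      rw [show dist x x0 - Treal = ((dist x x0 - Treal) ^ p) ^ p⁻¹ from
        (Real.rpow_rpow_inv (by linarith) (ne_of_gt hppos)).symm]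
      exact Real.rpow_le_rpow hq (by linarith) (by positivity)
    linarith
  -- minimizers
  have hsupp_closed : IsClosed (msupport μ) := isClosed_msupport' μ
  have hsupp_ne : (msupport μ).Nonempty := by
    by_contra h
    rw [Set.not_nonempty_iff_eq_empty] at h
    have h2 := measure_compl_msupport μ
    rw [h, Set.compl_empty, measure_univ] at h2
    exact one_ne_zero h2
  obtain ⟨xF, -, hxFmin⟩ :=
    exists_min hgcont hHB isClosed_univ ⟨x0, Set.mem_univ x0⟩ coercg
  obtain ⟨xG, hxGS, hxGmin⟩ := exists_min hgcont hHB hsupp_closed hsupp_ne coercg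
  -- a.e. events
  have E_A : ∀ᵐ ω ∂P, ∀ d ∈ D, Tendsto
      (fun n => (∑ i ∈ Finset.range n, dist d (Y i ω) ^ p) / ((n : ℕ) : ℝ))
      atTop (𝓝 (g d)) := by
    rw [ae_ball_iff hDc]
    intro d _
    exact slln P Y hYmeas hindep hlaw
      ((Real.continuous_rpow_const hp0).comp (continuous_const.dist continuous_id)).measurable
      (hμPp d)
  have E_B : ∀ᵐ ω ∂P, ∀ q : ℕ, Tendsto
      (fun n => (∑ i ∈ Finset.range n, (dist x0 (Y i ω) + q) ^ (p - 1)) / ((n : ℕ) : ℝ))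
      atTop (𝓝 (Hμ q)) := by
    rw [ae_all_iff]
    intro q
    exact slln P Y hYmeas hindep hlaw
      ((Real.continuous_rpow_const (by linarith)).comp
        ((continuous_const.dist continuous_id).add continuous_const)).measurable
      (integrable_H hp hμPp x0 (Nat.cast_nonneg q))
  have E_C : ∀ᵐ ω ∂P, Tendsto
      (fun n => (∑ i ∈ Finset.range n,
        (Metric.ball x0 Treal).indicator (fun _ => (1:ℝ)) (Y i ω)) / ((n : ℕ) : ℝ))
      atTop (𝓝 c) := by
    have hm : Measurable ((Metric.ball x0 Treal).indicator (fun _ => (1:ℝ))) :=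
      measurable_const.indicator measurableSet_ball
    have hi : Integrable ((Metric.ball x0 Treal).indicator (fun _ => (1:ℝ))) μ :=
      (integrable_const (1:ℝ)).indicator measurableSet_ball
    have heq : ∫ y, (Metric.ball x0 Treal).indicator (fun _ => (1:ℝ)) y ∂μ = c := by
      rw [integral_indicator_const _ measurableSet_ball, smul_eq_mul, mul_one]
      rfl
    have h2 := slln P Y hYmeas hindep hlaw hm hi
    rw [heq] at h2
    exact h2
  have E_D : ∀ᵐ ω ∂P, ∀ d ∈ D, ∀ k : ℕ, Tendsto
      (fun n => (∑ i ∈ Finset.range n,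
        (Metric.ball d (1/((k:ℝ)+1))).indicator (fun _ => (1:ℝ)) (Y i ω)) / ((n : ℕ) : ℝ))
      atTop (𝓝 ((μ (Metric.ball d (1/((k:ℝ)+1)))).toReal)) := by
    rw [ae_ball_iff hDc]
    intro d _
    rw [ae_all_iff]
    intro k
    have hm : Measurable ((Metric.ball d (1/((k:ℝ)+1))).indicator (fun _ => (1:ℝ))) :=
      measurable_const.indicator measurableSet_ball
    have hi : Integrable ((Metric.ball d (1/((k:ℝ)+1))).indicator (fun _ => (1:ℝ))) μ :=
      (integrable_const (1:ℝ)).indicator measurableSet_ball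
    have heq : ∫ y, (Metric.ball d (1/((k:ℝ)+1))).indicator (fun _ => (1:ℝ)) y ∂μ
        = (μ (Metric.ball d (1/((k:ℝ)+1)))).toReal := by
      rw [integral_indicator_const _ measurableSet_ball, smul_eq_mul, mul_one]
      rfl
    have h2 := slln P Y hYmeas hindep hlaw hm hi
    rw [heq] at h2
    exact h2
  have E_E : ∀ᵐ ω ∂P, ∀ i : ℕ, Y i ω ∈ msupport μ := by
    rw [ae_all_iff]
    intro i
    have h0 : ∀ᵐ y ∂μ, y ∈ msupport μ := by
      rw [ae_iff]
      have hce : {a : X | ¬ a ∈ msupport μ} = (msupport μ)ᶜ := rfl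
      rw [hce]
      exact measure_compl_msupport μ
    have h1 : ∀ᵐ y ∂(Measure.map (Y i) P), y ∈ msupport μ := by
      rw [hlaw i]; exact h0
    exact (ae_map_iff (hYmeas i).aemeasurable hsupp_closed.measurableSet).1 h1
  filter_upwards [E_A, E_B, E_C, E_D, E_E] with ω hA hB hC hD hE
  -- per-ω definitions
  set fn : ℕ → X → ℝ := fun n => fp p (empMeasure Y (n + 1) ω) with hfndef
  have hdistcont : ∀ x : X, Continuous fun y => dist x y ^ p := fun x =>
    (Real.continuous_rpow_const hp0).comp (continuous_const.dist continuous_id)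
  have hHcont : ∀ q : ℕ, Continuous fun y : X => (dist x0 y + (q:ℝ)) ^ (p - 1) := fun q =>
    (Real.continuous_rpow_const (by linarith)).comp
      ((continuous_const.dist continuous_id).add continuous_const)
  have hfneq : ∀ (n : ℕ) (x : X), fn n x
      = (∑ i ∈ Finset.range (n+1), dist x (Y i ω) ^ p) / (((n+1 : ℕ)) : ℝ) := fun n x =>
    integral_empMeasure' Y (n+1) ω (hdistcont x)
  have hMemp : ∀ n : ℕ, MemPp p (empMeasure Y (n+1) ω) := fun n x =>
    integrable_empMeasure Y (n+1) ω (hdistcont x)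
  have hHint : ∀ (n : ℕ) (q : ℕ),
      Integrable (fun y => (dist x0 y + (q:ℝ)) ^ (p - 1)) (empMeasure Y (n+1) ω) :=
    fun n q => integrable_empMeasure Y (n+1) ω (hHcont q)
  -- pointwise convergence on D
  have pointD : ∀ d ∈ D, Tendsto (fun n => fn n d) atTop (𝓝 (g d)) := by
    intro d hd
    have h2 := (hA d hd).comp (tendsto_add_atTop_nat 1)
    have heq : (fun n => fn n d)
        = fun n => (∑ i ∈ Finset.range (n+1), dist d (Y i ω) ^ p) / (((n+1 : ℕ)) : ℝ) :=
      funext fun n => hfneq n d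
    rw [heq]
    exact h2
  -- H-convergence
  have Hn_tend : ∀ q : ℕ, Tendsto
      (fun n => ∫ y, (dist x0 y + (q:ℝ)) ^ (p - 1) ∂(empMeasure Y (n+1) ω))
      atTop (𝓝 (Hμ q)) := by
    intro q
    have h2 := (hB q).comp (tendsto_add_atTop_nat 1)
    have heq : (fun n => ∫ y, (dist x0 y + (q:ℝ)) ^ (p - 1) ∂(empMeasure Y (n+1) ω))
        = fun n => (∑ i ∈ Finset.range (n+1), (dist x0 (Y i ω) + (q:ℝ)) ^ (p - 1))
            / (((n+1 : ℕ)) : ℝ) :=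
      funext fun n => integral_empMeasure' Y (n+1) ω (hHcont q)
    rw [heq]
    exact h2
  have hHn0 : ∀ (n q : ℕ),
      0 ≤ ∫ y, (dist x0 y + (q:ℝ)) ^ (p - 1) ∂(empMeasure Y (n+1) ω) := fun n q =>
    integral_nonneg fun y => Real.rpow_nonneg (by positivity) _
  have hevH : ∀ q : ℕ, ∀ᶠ n in atTop,
      ∫ y, (dist x0 y + (q:ℝ)) ^ (p - 1) ∂(empMeasure Y (n+1) ω) ≤ Hμ q + 1 := by
    intro q
    filter_upwards [eventually_abs_sub_le (Hn_tend q) one_pos] with n hn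
    linarith [(abs_le.1 hn).2]
  -- uniform convergence on compacts
  have unif : ∀ K : Set X, IsCompact K → ∀ η : ℝ, 0 < η →
      ∀ᶠ n in atTop, ∀ x ∈ K, |fn n x - g x| ≤ η := by
    intro K hK η hη
    obtain ⟨q0, hq0⟩ : ∃ q0 : ℕ, K ⊆ Metric.closedBall x0 (q0:ℝ) := by
      obtain ⟨r, hr⟩ := hK.isBounded.subset_closedBall x0
      obtain ⟨q0, hq0⟩ := exists_nat_gt r
      exact ⟨q0, hr.trans (Metric.closedBall_subset_closedBall hq0.le)⟩
    set q : ℕ := q0 + 1 with hqdef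
    set L : ℝ := p * (Hμ q + 1) + 1 with hLdef
    have hLpos : 0 < L := by
      have h0 : 0 ≤ p * (Hμ q + 1) := mul_nonneg hp0 (by linarith [hHμ0 q])
      linarith
    set r : ℝ := min (η / (3 * L)) 1 with hrdef
    have hrpos : 0 < r := lt_min (by positivity) one_pos
    have hcover : K ⊆ ⋃ d : D, Metric.ball (d : X) r := by
      intro x hx
      obtain ⟨d, hdD, hdist⟩ := hDd.exists_dist_lt x hrpos
      exact Set.mem_iUnion.2 ⟨⟨d, hdD⟩, Metric.mem_ball.2 hdist⟩
    obtain ⟨t, ht⟩ := hK.elim_finite_subcover (fun d : D => Metric.ball (d : X) r)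
      (fun _ => Metric.isOpen_ball) hcover
    have hev1 : ∀ᶠ n in atTop, ∀ d ∈ t, |fn n (d:X) - g (d:X)| ≤ η/3 :=
      t.eventually_all.2 fun d _ => eventually_abs_sub_le (pointD (d:X) d.2) (by linarith)
    filter_upwards [hev1, hevH q] with n h1 h2
    intro x hxK
    obtain ⟨d, hdt, hxd⟩ : ∃ d ∈ t, x ∈ Metric.ball (d:X) r := by
      obtain ⟨d, hdt, hxd⟩ := Set.mem_iUnion₂.1 (ht hxK)
      exact ⟨d, hdt, hxd⟩
    have hxq : dist x x0 ≤ (q:ℝ) := by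
      have h4 : dist x x0 ≤ (q0:ℝ) := Metric.mem_closedBall.1 (hq0 hxK)
      have h5 : ((q:ℕ):ℝ) = (q0:ℝ) + 1 := by rw [hqdef]; push_cast; ring
      linarith
    have hdq : dist (d:X) x0 ≤ (q:ℝ) := by
      have h4 : dist x x0 ≤ (q0:ℝ) := Metric.mem_closedBall.1 (hq0 hxK)
      have h5 : ((q:ℕ):ℝ) = (q0:ℝ) + 1 := by rw [hqdef]; push_cast; ring
      have h6 : dist (d:X) x ≤ r := by
        rw [dist_comm]
        exact (Metric.mem_ball.1 hxd).le
      have h7 : r ≤ 1 := min_le_right _ _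
      linarith [dist_triangle (d:X) x x0]
    have hdist_le : dist x (d:X) ≤ r := (Metric.mem_ball.1 hxd).le
    set In : ℝ := ∫ y, (dist x0 y + (q:ℝ)) ^ (p - 1) ∂(empMeasure Y (n+1) ω) with hIndef
    have hlipn : |fn n x - fn n (d:X)| ≤ p * dist x (d:X) * In :=
      fp_abs_sub_le hp (hMemp n) (hHint n q) hxq hdq
    have hlipg : |g x - g (d:X)| ≤ p * dist x (d:X) * Hμ q :=
      fp_abs_sub_le hp hμPp (integrable_H hp hμPp x0 (Nat.cast_nonneg q)) hxq hdq
    have hrL : L * r ≤ η/3 := by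
      have hrle : r ≤ η / (3*L) := min_le_left _ _
      have h8 : L * r ≤ L * (η/(3*L)) := mul_le_mul_of_nonneg_left hrle hLpos.le
      have h9 : L * (η/(3*L)) = η/3 := by
        field_simp
      linarith
    have e1 : p * dist x (d:X) * In ≤ η/3 := by
      have ha : p * dist x (d:X) * In ≤ p * r * (Hμ q + 1) :=
        mul_le_mul (mul_le_mul_of_nonneg_left hdist_le hp0) h2 (hHn0 n q)
          (by positivity)
      have hb : p * r * (Hμ q + 1) ≤ L * r := by
        have hc2 : p * (Hμ q + 1) ≤ L := by linarith
        calc p * r * (Hμ q + 1) = (p * (Hμ q + 1)) * r := by ring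
          _ ≤ L * r := mul_le_mul_of_nonneg_right hc2 hrpos.le
      linarith
    have e2 : p * dist x (d:X) * Hμ q ≤ η/3 := by
      have ha : p * dist x (d:X) * Hμ q ≤ p * r * (Hμ q + 1) :=
        mul_le_mul (mul_le_mul_of_nonneg_left hdist_le hp0) (by linarith [hHμ0 q])
          (hHμ0 q) (by positivity)
      have hb : p * r * (Hμ q + 1) ≤ L * r := by
        have hc2 : p * (Hμ q + 1) ≤ L := by linarith
        calc p * r * (Hμ q + 1) = (p * (Hμ q + 1)) * r := by ring
          _ ≤ L * r := mul_le_mul_of_nonneg_right hc2 hrpos.le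
      linarith
    have e3 : |fn n (d:X) - g (d:X)| ≤ η/3 := h1 d hdt
    have t1 := abs_sub_le (fn n x) (fn n (d:X)) (g x)
    have t2 := abs_sub_le (fn n (d:X)) (g (d:X)) (g x)
    have t3 : |g (d:X) - g x| = |g x - g (d:X)| := abs_sub_comm _ _
    have t4 := abs_le.1 hlipn
    have t5 := abs_le.1 hlipg
    have t6 := abs_le.1 e3
    refine abs_le.2 ⟨?_, ?_⟩ <;> nlinarith [t1, t2, t4.1, t4.2, t5.1, t5.2, t6.1, t6.2, e1, e2]
  -- pointwise convergence everywhere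
  have pointAll : ∀ x : X, Tendsto (fun n => fn n x) atTop (𝓝 (g x)) := by
    intro x
    rw [Metric.tendsto_atTop]
    intro ε hε
    obtain ⟨N, hN⟩ := eventually_atTop.1 (unif {x} isCompact_singleton (ε/2) (by linarith))
    refine ⟨N, fun n hn => ?_⟩
    have h2 := hN n hn x (Set.mem_singleton x)
    rw [Real.dist_eq]
    linarith
  -- coercivity for fn
  have coercn : ∀ B : ℝ, ∃ R : ℝ, ∀ᶠ n in atTop, ∀ x : X, fn n x ≤ B → dist x x0 ≤ R := by
    intro B
    refine ⟨Treal + (max (4*B) 0 + 1) ^ p⁻¹, ?_⟩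
    have hCshift := hC.comp (tendsto_add_atTop_nat 1)
    have hev : ∀ᶠ n in atTop, 1/4 < (∑ i ∈ Finset.range (n+1),
        (Metric.ball x0 Treal).indicator (fun _ => (1:ℝ)) (Y i ω)) / (((n+1:ℕ)) : ℝ) :=
      hCshift.eventually (eventually_gt_nhds (by linarith : (1/4:ℝ) < c))
    filter_upwards [hev] with n hn
    intro x hx
    by_contra hcon
    push_neg at hcon
    have hA0 : (0:ℝ) ≤ (max (4*B) 0 + 1) ^ p⁻¹ := Real.rpow_nonneg (by positivity) _
    have hdT : Treal ≤ dist x x0 := by linarith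
    have hA0' : 0 ≤ dist x x0 - Treal := by linarith
    have hterm : ∀ i, (Metric.ball x0 Treal).indicator (fun _ => (1:ℝ)) (Y i ω)
        * (dist x x0 - Treal) ^ p ≤ dist x (Y i ω) ^ p := by
      intro i
      by_cases hmem : Y i ω ∈ Metric.ball x0 Treal
      · rw [Set.indicator_of_mem hmem, one_mul]
        refine Real.rpow_le_rpow hA0' ?_ hp0
        have h5 : dist (Y i ω) x0 < Treal := Metric.mem_ball.1 hmem
        have h6 := dist_triangle x (Y i ω) x0
        have h7 := dist_triangle x x0 (Y i ω)
        linarith [dist_comm (Y i ω) x0]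
      · rw [Set.indicator_of_notMem hmem, zero_mul]
        exact Real.rpow_nonneg dist_nonneg _
    have hsum : (∑ i ∈ Finset.range (n+1),
        (Metric.ball x0 Treal).indicator (fun _ => (1:ℝ)) (Y i ω)) * (dist x x0 - Treal) ^ p
        ≤ ∑ i ∈ Finset.range (n+1), dist x (Y i ω) ^ p := by
      rw [Finset.sum_mul]
      exact Finset.sum_le_sum fun i _ => hterm i
    have hnpos : (0:ℝ) < (((n+1:ℕ)) : ℝ) := by positivity
    have hfnge : (∑ i ∈ Finset.range (n+1),
        (Metric.ball x0 Treal).indicator (fun _ => (1:ℝ)) (Y i ω)) / (((n+1:ℕ)) : ℝ)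
        * (dist x x0 - Treal) ^ p ≤ fn n x := by
      rw [hfneq n x, div_mul_eq_mul_div]
      exact (div_le_div_iff_of_pos_right hnpos).2 hsum
    have hApow : 0 ≤ (dist x x0 - Treal) ^ p := Real.rpow_nonneg hA0' p
    have h7 : 1/4 * (dist x x0 - Treal) ^ p ≤ fn n x :=
      le_trans (mul_le_mul_of_nonneg_right (le_of_lt hn) hApow) hfnge
    have h8 : (dist x x0 - Treal) ^ p ≤ max (4*B) 0 := by
      have h9 : 1/4 * (dist x x0 - Treal) ^ p ≤ B := le_trans h7 hx
      linarith [le_max_left (4*B) (0:ℝ)]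
    have h9 : dist x x0 - Treal ≤ (max (4*B) 0 + 1) ^ p⁻¹ := by
      rw [show dist x x0 - Treal = ((dist x x0 - Treal) ^ p) ^ p⁻¹ from
        (Real.rpow_rpow_inv hA0' (ne_of_gt hppos)).symm]
      exact Real.rpow_le_rpow hApow (by linarith) (by positivity)
    linarith
  -- approx for the unrestricted problem
  have approx_univ : ∀ η : ℝ, 0 < η → ∀ᶠ n in atTop,
      ∃ y ∈ (Set.univ : Set X), fn n y ≤ g xF + η := by
    intro η hη
    filter_upwards [eventually_abs_sub_le (pointAll xF) hη] with n hn
    exact ⟨xF, Set.mem_univ xF, by linarith [(abs_le.1 hn).2]⟩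
  -- approx for the restricted problem
  have approx_supp : ∀ η : ℝ, 0 < η → ∀ᶠ n in atTop,
      ∃ y ∈ msupport (empMeasure Y (n+1) ω), fn n y ≤ g xG + η := by
    intro η hη
    set q : ℕ := ⌈dist x0 xG⌉₊ + 2 with hq2def
    set L : ℝ := p * (Hμ q + 1) + 1 with hL2def
    have hLpos : 0 < L := by
      have h0 : 0 ≤ p * (Hμ q + 1) := mul_nonneg hp0 (by linarith [hHμ0 q])
      linarith
    have hmpos : 0 < min (η/(3*L)) 1 := lt_min (by positivity) one_pos
    obtain ⟨k, hk⟩ : ∃ k : ℕ, 2 / ((k:ℝ)+1) < min (η/(3*L)) 1 := by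
      obtain ⟨k, hk⟩ := exists_nat_gt (2 / min (η/(3*L)) 1)
      refine ⟨k, ?_⟩
      rw [div_lt_iff₀ (by positivity : (0:ℝ) < (k:ℝ)+1)]
      rw [div_lt_iff₀ hmpos] at hk
      nlinarith [hmpos]
    have hrpos : (0:ℝ) < 1/((k:ℝ)+1) := by positivity
    obtain ⟨d, hdD, hdxG⟩ := hDd.exists_dist_lt xG hrpos
    have hdpos : 0 < μ (Metric.ball d (1/((k:ℝ)+1))) :=
      hxGS _ Metric.isOpen_ball (Metric.mem_ball.2 hdxG)
    have hctoReal : 0 < (μ (Metric.ball d (1/((k:ℝ)+1)))).toReal :=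
      ENNReal.toReal_pos (ne_of_gt hdpos) (measure_ne_top μ _)
    have hDtend := (hD d hdD k).comp (tendsto_add_atTop_nat 1)
    have hev_hit : ∀ᶠ n in atTop, ∃ i < n + 1, Y i ω ∈ Metric.ball d (1/((k:ℝ)+1)) := by
      have hev := hDtend.eventually (eventually_gt_nhds hctoReal)
      filter_upwards [hev] with n hn
      by_contra hno
      push_neg at hno
      have hz : (∑ i ∈ Finset.range (n+1),
          (Metric.ball d (1/((k:ℝ)+1))).indicator (fun _ => (1:ℝ)) (Y i ω)) = 0 :=
        Finset.sum_eq_zero fun i hi =>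
          Set.indicator_of_notMem (hno i (Finset.mem_range.1 hi)) _
      have hn' : (0:ℝ) < (∑ i ∈ Finset.range (n+1),
          (Metric.ball d (1/((k:ℝ)+1))).indicator (fun _ => (1:ℝ)) (Y i ω))
          / (((n+1:ℕ)) : ℝ) := hn
      rw [hz] at hn'
      simp at hn'
    have hevxG : ∀ᶠ n in atTop, |fn n xG - g xG| ≤ η/3 :=
      eventually_abs_sub_le (pointAll xG) (by linarith)
    filter_upwards [hev_hit, hevxG, hevH q] with n hhit hxGn hHn
    obtain ⟨i, hi, hmem⟩ := hhit
    have hymem : Y i ω ∈ msupport (empMeasure Y (n+1) ω) := by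
      rw [msupport_empMeasure Y (Nat.succ_ne_zero n) ω]
      exact ⟨i, hi, rfl⟩
    refine ⟨Y i ω, hymem, ?_⟩
    have h2r1 : 2 * (1/((k:ℝ)+1)) ≤ 1 := by
      have := min_le_right (η/(3*L)) 1
      have h2 : 2 / ((k:ℝ)+1) = 2 * (1/((k:ℝ)+1)) := by ring
      linarith [hk]
    have h2rL : 2 * (1/((k:ℝ)+1)) ≤ η/(3*L) := by
      have := min_le_left (η/(3*L)) 1
      have h2 : 2 / ((k:ℝ)+1) = 2 * (1/((k:ℝ)+1)) := by ring
      linarith [hk]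
    have hdyxG : dist (Y i ω) xG ≤ 2 * (1/((k:ℝ)+1)) := by
      have hyd : dist (Y i ω) d < 1/((k:ℝ)+1) := Metric.mem_ball.1 hmem
      have hdG : dist d xG = dist xG d := dist_comm d xG
      linarith [dist_triangle (Y i ω) d xG, hdxG]
    have hq2 : dist xG x0 ≤ (q:ℝ) - 2 := by
      have h3 := Nat.le_ceil (dist x0 xG)
      have h4 : ((q:ℕ):ℝ) = (⌈dist x0 xG⌉₊ : ℝ) + 2 := by rw [hq2def]; push_cast; ring
      rw [dist_comm]
      linarith
    have hyq : dist (Y i ω) x0 ≤ (q:ℝ) := by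
      linarith [dist_triangle (Y i ω) xG x0, hdyxG, hq2, h2r1]
    have hxGq : dist xG x0 ≤ (q:ℝ) := by linarith
    have hlip := fp_abs_sub_le hp (hMemp n) (hHint n q) hyq hxGq
    set In : ℝ := ∫ y, (dist x0 y + (q:ℝ)) ^ (p - 1) ∂(empMeasure Y (n+1) ω) with hIndef
    have hd1 : fn n (Y i ω) ≤ fn n xG + p * dist (Y i ω) xG * In := by
      linarith [le_abs_self (fn n (Y i ω) - fn n xG), hlip]
    have hb1 : p * dist (Y i ω) xG * In ≤ η/3 := by
      have ha : p * dist (Y i ω) xG * In ≤ p * (2 * (1/((k:ℝ)+1))) * (Hμ q + 1) :=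
        mul_le_mul (mul_le_mul_of_nonneg_left hdyxG hp0) hHn (hHn0 n q) (by positivity)
      have hb : p * (2 * (1/((k:ℝ)+1))) * (Hμ q + 1) ≤ L * (2 * (1/((k:ℝ)+1))) := by
        have hc2 : p * (Hμ q + 1) ≤ L := by linarith
        calc p * (2 * (1/((k:ℝ)+1))) * (Hμ q + 1)
            = (p * (Hμ q + 1)) * (2 * (1/((k:ℝ)+1))) := by ring
          _ ≤ L * (2 * (1/((k:ℝ)+1))) := mul_le_mul_of_nonneg_right hc2 (by positivity)
      have hc3 : L * (2 * (1/((k:ℝ)+1))) ≤ L * (η/(3*L)) :=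
        mul_le_mul_of_nonneg_left h2rL hLpos.le
      have hc4 : L * (η/(3*L)) = η/3 := by field_simp
      linarith
    have hb2 : fn n xG ≤ g xG + η/3 := by linarith [(abs_le.1 hxGn).2]
    linarith
  -- conclusion
  constructor
  · refine tendsto_of_eventually_le' (fun n => rho_nonneg') ?_
    intro ε hε
    have hmd := main_det hHB hgcont isClosed_univ (fun n => Set.subset_univ _)
      (Set.mem_univ xF) hxFmin coercn unif approx_univ hε
    filter_upwards [hmd] with n hn
    refine rho_le_of_forall hε.le fun x hx => ?_
    exact hn x hx.1 hx.2
  · have hSn : ∀ n : ℕ, msupport (empMeasure Y (n+1) ω) ⊆ msupport μ := by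
      intro n x hx
      rw [msupport_empMeasure Y (Nat.succ_ne_zero n) ω] at hx
      obtain ⟨i, -, rfl⟩ := hx
      exact hE i
    refine tendsto_of_eventually_le' (fun n => rho_nonneg') ?_
    intro ε hε
    have hmd := main_det hHB hgcont hsupp_closed hSn hxGS hxGmin coercn unif approx_supp hε
    filter_upwards [hmd] with n hn
    refine rho_le_of_forall hε.le fun x hx => ?_
    exact hn x hx.1 hx.2
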